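/- Let a_1, a_2, a_3 be positive integers with gcd(a_1, a_2, a_3) = 1 such that a_1 ≡ 0, a_2 ≡ 1, and a_3 ≡ 2 (mod 3). Then the quotient ⟨a_1, a_2, a_3⟩/3 equals the numerical semigroup generated by a_1/3, a_2, a_3, and (a_2 + a_3)/3. -/

import Mathlib

lemma mem_closure3' {a b c x : ℕ} :
    x ∈ AddSubmonoid.closure ({a, b, c} : Set ℕ) ↔ ∃ p q r, p*a + q*b + r*c = x := by
  constructor
  · intro hx
    induction hx using AddSubmonoid.closure_induction with
    | mem y hy =>
      rcases hy with rfl | rfl | rfl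
      · exact ⟨1, 0, 0, by ring⟩
      · exact ⟨0, 1, 0, by ring⟩
      · exact ⟨0, 0, 1, by ring⟩
    | zero => exact ⟨0, 0, 0, by ring⟩
    | add u v _ _ hu hv =>
      obtain ⟨p, q, r, rfl⟩ := hu
      obtain ⟨p', q', r', rfl⟩ := hv
      exact ⟨p + p', q + q', r + r', by ring⟩
  · rintro ⟨p, q, r, rfl⟩
    have ha : a ∈ AddSubmonoid.closure ({a, b, c} : Set ℕ) :=
      AddSubmonoid.subset_closure (by simp)
    have hb : b ∈ AddSubmonoid.closure ({a, b, c} : Set ℕ) :=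
      AddSubmonoid.subset_closure (by simp)
    have hc : c ∈ AddSubmonoid.closure ({a, b, c} : Set ℕ) :=
      AddSubmonoid.subset_closure (by simp)
    exact add_mem (add_mem (by simpa [smul_eq_mul] using nsmul_mem ha p)
      (by simpa [smul_eq_mul] using nsmul_mem hb q))
      (by simpa [smul_eq_mul] using nsmul_mem hc r)

lemma mem_closure4' {a b c d x : ℕ} :
    x ∈ AddSubmonoid.closure ({a, b, c, d} : Set ℕ) ↔
      ∃ p q r s, p*a + q*b + r*c + s*d = x := by
  constructor
  · intro hx
    induction hx using AddSubmonoid.closure_induction with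
    | mem y hy =>
      rcases hy with rfl | rfl | rfl | rfl
      · exact ⟨1, 0, 0, 0, by ring⟩
      · exact ⟨0, 1, 0, 0, by ring⟩
      · exact ⟨0, 0, 1, 0, by ring⟩
      · exact ⟨0, 0, 0, 1, by ring⟩
    | zero => exact ⟨0, 0, 0, 0, by ring⟩
    | add u v _ _ hu hv =>
      obtain ⟨p, q, r, s, rfl⟩ := hu
      obtain ⟨p', q', r', s', rfl⟩ := hv
      exact ⟨p + p', q + q', r + r', s + s', by ring⟩
  · rintro ⟨p, q, r, s, rfl⟩
    have ha : a ∈ AddSubmonoid.closure ({a, b, c, d} : Set ℕ) :=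
      AddSubmonoid.subset_closure (by simp)
    have hb : b ∈ AddSubmonoid.closure ({a, b, c, d} : Set ℕ) :=
      AddSubmonoid.subset_closure (by simp)
    have hc : c ∈ AddSubmonoid.closure ({a, b, c, d} : Set ℕ) :=
      AddSubmonoid.subset_closure (by simp)
    have hd : d ∈ AddSubmonoid.closure ({a, b, c, d} : Set ℕ) :=
      AddSubmonoid.subset_closure (by simp)
    exact add_mem (add_mem (add_mem
      (by simpa [smul_eq_mul] using nsmul_mem ha p)
      (by simpa [smul_eq_mul] using nsmul_mem hb q))
      (by simpa [smul_eq_mul] using nsmul_mem hc r))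
      (by simpa [smul_eq_mul] using nsmul_mem hd s)

/-- Table 1, row (p,t₁,t₂,t₃) = (3,0,1,2): for `a₁ ≡ 0`, `a₂ ≡ 1`, `a₃ ≡ 2 (mod 3)`
with gcd 1, `⟨a₁, a₂, a₃⟩/3 = ⟨a₁/3, a₂, a₃, (a₂+a₃)/3⟩`. -/
theorem quotient_three_012
    (a₁ a₂ a₃ : ℕ) (h₁ : 0 < a₁) (h₂ : 0 < a₂) (h₃ : 0 < a₃)
    (hgcd : Nat.gcd a₁ (Nat.gcd a₂ a₃) = 1)
    (hm₁ : a₁ % 3 = 0) (hm₂ : a₂ % 3 = 1) (hm₃ : a₃ % 3 = 2) :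
    {m : ℕ | 3 * m ∈ AddSubmonoid.closure ({a₁, a₂, a₃} : Set ℕ)} =
      ↑(AddSubmonoid.closure ({a₁ / 3, a₂, a₃, (a₂ + a₃) / 3} : Set ℕ)) := by
  obtain ⟨k₁, rfl⟩ : ∃ k, a₁ = 3 * k := ⟨a₁ / 3, by omega⟩
  obtain ⟨k₂, rfl⟩ : ∃ k, a₂ = 3 * k + 1 := ⟨a₂ / 3, by omega⟩
  obtain ⟨k₃, rfl⟩ : ∃ k, a₃ = 3 * k + 2 := ⟨a₃ / 3, by omega⟩
  have hd1 : (3 * k₁) / 3 = k₁ := by omega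
  have hd2 : ((3 * k₂ + 1) + (3 * k₃ + 2)) / 3 = k₂ + k₃ + 1 := by omega
  ext m
  simp only [Set.mem_setOf_eq, SetLike.mem_coe, mem_closure3', mem_closure4', hd1, hd2]
  constructor
  · rintro ⟨x, y, z, heq⟩
    have h' : 3 * (x * k₁ + y * k₂ + z * k₃) + (y + 2 * z) = 3 * m := by
      rw [← heq]; ring
    obtain ⟨q, q', r, hy, hz⟩ : ∃ q q' r, y = 3 * q + r ∧ z = 3 * q' + r :=
      ⟨y / 3, z / 3, y % 3, by omega, by omega⟩
    refine ⟨x, q, q', r, ?_⟩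
    have hm : 3 * (x * k₁ + q * (3 * k₂ + 1) + q' * (3 * k₃ + 2) + r * (k₂ + k₃ + 1))
        = 3 * m := by rw [← heq, hy, hz]; ring
    omega
  · rintro ⟨p, q, r, s, rfl⟩
    exact ⟨p, 3 * q + s, 3 * r + s, by ring⟩
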